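/- Let φ be a continuous flow on a topological space X and define the relation R = {(x, y) ∈ X × X : y ∈ closure of the orbit of x}. If R is closed in X × X, then R is symmetric: y ∈ closure(O(x)) implies x ∈ closure(O(y)). -/
import Mathlib

/-- If the orbit-closure relation is closed, it is symmetric. -/
theorem Rclosed_symmetric {X : Type*} [TopologicalSpace X]
    (φ : ℝ → X → X)
    (h0 : ∀ x, φ 0 x = x)
    (hadd : ∀ s t x, φ (s + t) x = φ s (φ t x))
    (hcont : Continuous fun p : ℝ × X => φ p.1 p.2)
    (hR : IsClosed {p : X × X | p.2 ∈ closure {y : X | ∃ t : ℝ, φ t p.1 = y}}) :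
    ∀ x y : X, y ∈ closure {z : X | ∃ t : ℝ, φ t x = z} →
      x ∈ closure {z : X | ∃ t : ℝ, φ t y = z} := by
  intro x y hy
  have hclosed : IsClosed {z : X | x ∈ closure {w : X | ∃ t : ℝ, φ t z = w}} := by
    have : Continuous fun z : X => (z, x) := by continuity
    exact hR.preimage this
  have hsub : {z : X | ∃ t : ℝ, φ t x = z} ⊆
      {z : X | x ∈ closure {w : X | ∃ t : ℝ, φ t z = w}} := by
    rintro z ⟨t, rfl⟩
    apply subset_closure
    exact ⟨-t, by rw [← hadd, neg_add_cancel, h0]⟩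
  exact (closure_minimal hsub hclosed) hy
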